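/- Define Q_n in Z[q] by the recurrence q^{n(n+1)/2} = sum_{r=0}^n C(n, n-r)_q Q_r (with Gaussian binomial coefficients). Then Q_{2r+1} = prod_{i=0}^{r} (q^{2r+1} - q^{2i}) and Q_{2r} = prod_{i=1}^{r} (q^{2r+1} - q^{2i}). -/

import Mathlib

open Finset

/-- The Gaussian binomial coefficient `C(n, m)_q` as a polynomial in `ℤ[q]`, defined by
the q-Pascal recurrence `C(n+1, m+1)_q = C(n, m)_q + q^(m+1) C(n, m+1)_q`. -/
noncomputable def gbinomPoly : ℕ → ℕ → Polynomial ℤ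
  | _, 0 => 1
  | 0, _ + 1 => 0
  | n + 1, m + 1 => gbinomPoly n m + Polynomial.X ^ (m + 1) * gbinomPoly n (m + 1)

open Polynomial

lemma gb_zero (n : ℕ) : gbinomPoly n 0 = 1 := by cases n <;> rfl

lemma gb_succ (n m : ℕ) : gbinomPoly (n+1) (m+1)
    = gbinomPoly n m + X ^ (m + 1) * gbinomPoly n (m + 1) := rfl

lemma gb_of_lt : ∀ n m : ℕ, n < m → gbinomPoly n m = 0 := by
  intro n
  induction n with
  | zero =>
    intro m hm
    match m, hm with
    | (k+1), _ => rfl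
  | succ n ih =>
    intro m hm
    match m, hm with
    | (k+1), hm =>
      rw [gb_succ, ih k (by omega), ih (k+1) (by omega), mul_zero, add_zero]

lemma gb_self : ∀ n : ℕ, gbinomPoly n n = 1 := by
  intro n
  induction n with
  | zero => rfl
  | succ n ih => rw [gb_succ, ih, gb_of_lt n (n+1) (by omega), mul_zero, add_zero]

lemma gb_one_aux : ∀ m : ℕ, 1 + X * gbinomPoly m 1 = X ^ m + gbinomPoly m 1 := by
  intro m
  induction m with
  | zero => norm_num [show gbinomPoly 0 1 = 0 from rfl]
  | succ m ih =>
    rw [gb_succ, gb_zero, pow_one]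
    linear_combination X * ih

lemma gb_dual : ∀ n k : ℕ, k ≤ n → gbinomPoly (n+1) (k+1)
    = X ^ (n - k) * gbinomPoly n k + gbinomPoly n (k+1) := by
  intro n
  induction n with
  | zero =>
    intro k hk
    interval_cases k
    simp [gb_succ, gb_self, gb_of_lt 0 1 (by omega), gb_zero]
  | succ n ih =>
    intro k hk
    rcases eq_or_lt_of_le hk with h | h
    · subst h
      rw [gb_self, gb_self, gb_of_lt (n+1) (n+2) (by omega)]
      simp
    · have hk' : k ≤ n := by omega
      match k with
      | 0 =>
        simp only [gb_succ, gb_zero, Nat.sub_zero, zero_add, pow_one, mul_one]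
        linear_combination X * gb_one_aux n
      | (j+1) =>
        have hj : j ≤ n := by omega
        have hj2 : j + 1 ≤ n := by omega
        have hrel : (X : Polynomial ℤ) ^ (n - (j+1)) * X = X ^ (n - j) := by
          rw [← pow_succ]; congr 1; omega
        rw [show gbinomPoly (n+1+1) (j+1+1) = _ from gb_succ (n+1) (j+1),
          show n+1-(j+1) = n - j from by omega]
        have e1 := ih j hj
        have e2 := ih (j+1) hj2
        have e3 := gb_succ n j
        have e4 := gb_succ n (j+1)
        linear_combination e1 + X^(j+2)*e2 - X^(n-j)*e3 - e4
          + X^(j+1)*gbinomPoly n (j+1) * hrel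

open Finset Polynomial

noncomputable def Pq : ℕ → Polynomial ℤ
  | 0 => 1
  | n+1 => (X ^ (n+1) - if n % 2 = 0 then 1 else 0) * Pq n

lemma Pq_succ (n : ℕ) :
    Pq (n+1) = (X ^ (n+1) - if n % 2 = 0 then 1 else 0) * Pq n := rfl

def T (n : ℕ) : ℕ := n * (n + 1) / 2

lemma T_succ (n : ℕ) : T (n+1) = T n + (n+1) := by
  show (n+1) * (n+2) / 2 = n * (n+1) / 2 + (n+1)
  rw [show (n+1) * (n+2) = n * (n+1) + 2 * (n+1) from by ring,
    Nat.add_mul_div_left _ _ (by norm_num : 0 < 2)]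

lemma T_pred (n : ℕ) : T (n-1) + n = T n := by
  match n with
  | 0 => rfl
  | (m+1) => rw [T_succ]; rfl

noncomputable def cS (n : ℕ) : Polynomial ℤ :=
  ∑ k ∈ range (n+1), if n % 2 = k % 2 then X ^ k * gbinomPoly n k * Pq (n - k) else 0

noncomputable def dS (n : ℕ) : Polynomial ℤ :=
  ∑ k ∈ range (n+1), if n % 2 = k % 2 then 0 else X ^ k * gbinomPoly n k * Pq (n - k)

noncomputable def gS (n : ℕ) : Polynomial ℤ :=
  ∑ k ∈ range (n+1), if n % 2 = k % 2 then X ^ (2*k) * gbinomPoly n k * Pq (n - k) else 0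

noncomputable def aS (n : ℕ) : Polynomial ℤ :=
  ∑ k ∈ range (n+1), gbinomPoly n k * Pq (n - k)

/-- Shared sum lemma S2: the "shifted odd sum". -/
lemma S2lem (n : ℕ) :
    (∑ i ∈ range (n+1),
        if n % 2 = i % 2 then X ^ (2*(i+1)) * gbinomPoly n (i+1) * Pq (n - i) else 0)
      + (if n % 2 = 0 then 0 else Pq (n+1)) = X ^ (n+1) * dS n := by
  set h : ℕ → Polynomial ℤ := fun j =>
    if n % 2 = j % 2 then 0 else X ^ (2*j) * gbinomPoly n j * Pq (n+1-j) with hh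
  have hsum : ∀ i ∈ range (n+1),
      (if n % 2 = i % 2 then X ^ (2*(i+1)) * gbinomPoly n (i+1) * Pq (n - i) else 0)
        = h (i+1) := by
    intro i hi
    simp only [mem_range] at hi
    rw [hh]
    simp only []
    rw [show n + 1 - (i+1) = n - i from by omega]
    by_cases hp : n % 2 = i % 2
    · rw [if_pos hp, if_neg (by omega)]
    · rw [if_neg hp, if_pos (by omega)]
  rw [Finset.sum_congr rfl hsum]
  have h0 : (if n % 2 = 0 then (0 : Polynomial ℤ) else Pq (n+1)) = h 0 := by
    rw [hh]; simp [gb_zero]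
  rw [h0, ← Finset.sum_range_succ' h (n+1), Finset.sum_range_succ]
  have hend : h (n+1) = 0 := by
    rw [hh]; simp only []
    rw [gb_of_lt n (n+1) (by omega)]
    split <;> simp
  rw [hend, add_zero]
  have hterm : ∀ j ∈ range (n+1),
      h j = X ^ (n+1) * (if n % 2 = j % 2 then 0 else X ^ j * gbinomPoly n j * Pq (n - j)) := by
    intro j hj
    simp only [mem_range] at hj
    rw [hh]; simp only []
    by_cases hp : n % 2 = j % 2
    · rw [if_pos hp, if_pos hp, mul_zero]
    · rw [if_neg hp, if_neg hp]
      have hP : Pq (n + 1 - j) = X ^ (n - j + 1) * Pq (n - j) := by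
        rw [show n + 1 - j = (n - j) + 1 from by omega, Pq_succ,
          if_neg (by omega : ¬ (n - j) % 2 = 0), sub_zero]
      rw [hP]
      calc X ^ (2*j) * gbinomPoly n j * (X ^ (n-j+1) * Pq (n-j))
          = X ^ (2*j) * X ^ (n-j+1) * (gbinomPoly n j * Pq (n-j)) := by ring
        _ = X ^ ((n+1)+j) * (gbinomPoly n j * Pq (n-j)) := by
            rw [← pow_add, show 2*j + (n-j+1) = (n+1)+j from by omega]
        _ = X ^ (n+1) * (X ^ j * gbinomPoly n j * Pq (n-j)) := by rw [pow_add]; ring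
  rw [Finset.sum_congr rfl hterm, ← Finset.mul_sum]
  rfl

lemma S3lem (n : ℕ) :
    (∑ i ∈ range (n+1),
        if n % 2 = i % 2 then 0 else X ^ (2*(i+1)) * gbinomPoly n (i+1) * Pq (n - i))
      + (if n % 2 = 0 then Pq (n+1) else 0) = X ^ (n+1) * cS n - gS n := by
  set h : ℕ → Polynomial ℤ := fun j =>
    if n % 2 = j % 2 then X ^ (2*j) * gbinomPoly n j * Pq (n+1-j) else 0 with hh
  have hsum : ∀ i ∈ range (n+1),
      (if n % 2 = i % 2 then 0 else X ^ (2*(i+1)) * gbinomPoly n (i+1) * Pq (n - i))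
        = h (i+1) := by
    intro i hi
    simp only [mem_range] at hi
    rw [hh]
    simp only []
    rw [show n + 1 - (i+1) = n - i from by omega]
    by_cases hp : n % 2 = i % 2
    · rw [if_pos hp, if_neg (by omega)]
    · rw [if_neg hp, if_pos (by omega)]
  rw [Finset.sum_congr rfl hsum]
  have h0 : (if n % 2 = 0 then Pq (n+1) else (0 : Polynomial ℤ)) = h 0 := by
    rw [hh]; simp [gb_zero]
  rw [h0, ← Finset.sum_range_succ' h (n+1), Finset.sum_range_succ]
  have hend : h (n+1) = 0 := by
    rw [hh]; simp only []
    rw [gb_of_lt n (n+1) (by omega)]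
    split <;> simp
  rw [hend, add_zero]
  have hterm : ∀ j ∈ range (n+1),
      h j = X ^ (n+1) * (if n % 2 = j % 2 then X ^ j * gbinomPoly n j * Pq (n - j) else 0)
        - (if n % 2 = j % 2 then X ^ (2*j) * gbinomPoly n j * Pq (n - j) else 0) := by
    intro j hj
    simp only [mem_range] at hj
    rw [hh]; simp only []
    by_cases hp : n % 2 = j % 2
    · rw [if_pos hp, if_pos hp, if_pos hp]
      have hP : Pq (n + 1 - j) = X ^ (n - j + 1) * Pq (n - j) - Pq (n - j) := by
        rw [show n + 1 - j = (n - j) + 1 from by omega, Pq_succ,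
          if_pos (by omega : (n - j) % 2 = 0)]
        ring
      rw [hP]
      have he : (X : Polynomial ℤ) ^ (2*j) * X ^ (n-j+1) = X ^ (n+1) * X ^ j := by
        rw [← pow_add, ← pow_add, show 2*j + (n-j+1) = (n+1)+j from by omega]
      linear_combination gbinomPoly n j * Pq (n - j) * he
    · rw [if_neg hp, if_neg hp, if_neg hp, mul_zero, sub_zero]
  rw [Finset.sum_congr rfl hterm, Finset.sum_sub_distrib, ← Finset.mul_sum]
  rfl

lemma S4lem (n : ℕ) :
    (∑ i ∈ range (n+1), X ^ (i+1) * gbinomPoly n (i+1) * Pq (n - i))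
      + Pq (n+1) = X ^ (n+1) * aS n - cS n := by
  set h : ℕ → Polynomial ℤ := fun j => X ^ j * gbinomPoly n j * Pq (n+1-j) with hh
  have hsum : ∀ i ∈ range (n+1),
      X ^ (i+1) * gbinomPoly n (i+1) * Pq (n - i) = h (i+1) := by
    intro i hi
    simp only [mem_range] at hi
    rw [hh]
    simp only []
    rw [show n + 1 - (i+1) = n - i from by omega]
  rw [Finset.sum_congr rfl hsum]
  have h0 : Pq (n+1) = h 0 := by rw [hh]; simp [gb_zero]
  rw [h0, ← Finset.sum_range_succ' h (n+1), Finset.sum_range_succ]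
  have hend : h (n+1) = 0 := by
    rw [hh]; simp only []
    rw [gb_of_lt n (n+1) (by omega)]
    simp
  rw [hend, add_zero]
  have hterm : ∀ j ∈ range (n+1),
      h j = X ^ (n+1) * (gbinomPoly n j * Pq (n - j))
        - (if n % 2 = j % 2 then X ^ j * gbinomPoly n j * Pq (n - j) else 0) := by
    intro j hj
    simp only [mem_range] at hj
    rw [hh]; simp only []
    have he : (X : Polynomial ℤ) ^ j * X ^ (n-j+1) = X ^ (n+1) := by
      rw [← pow_add, show j + (n-j+1) = n+1 from by omega]
    by_cases hp : n % 2 = j % 2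
    · rw [if_pos hp]
      have hP : Pq (n + 1 - j) = X ^ (n - j + 1) * Pq (n - j) - Pq (n - j) := by
        rw [show n + 1 - j = (n - j) + 1 from by omega, Pq_succ,
          if_pos (by omega : (n - j) % 2 = 0)]
        ring
      rw [hP]
      linear_combination gbinomPoly n j * Pq (n - j) * he
    · rw [if_neg hp, sub_zero]
      have hP : Pq (n + 1 - j) = X ^ (n - j + 1) * Pq (n - j) := by
        rw [show n + 1 - j = (n - j) + 1 from by omega, Pq_succ,
          if_neg (by omega : ¬ (n - j) % 2 = 0), sub_zero]
      rw [hP]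
      linear_combination gbinomPoly n j * Pq (n - j) * he
  rw [Finset.sum_congr rfl hterm, Finset.sum_sub_distrib, ← Finset.mul_sum]
  rfl

lemma stepC (n : ℕ) : cS (n+1) = X * cS n + X ^ (n+1) * dS n := by
  have expand : cS (n+1) = (∑ i ∈ range (n+1),
      (X * (if n % 2 = i % 2 then X ^ i * gbinomPoly n i * Pq (n - i) else 0)
        + (if n % 2 = i % 2 then X ^ (2*(i+1)) * gbinomPoly n (i+1) * Pq (n - i) else 0)))
      + (if n % 2 = 0 then 0 else Pq (n+1)) := by
    rw [show cS (n+1) = ∑ k ∈ range (n+1+1),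
        (if (n+1) % 2 = k % 2 then X ^ k * gbinomPoly (n+1) k * Pq (n+1-k) else 0) from rfl,
      Finset.sum_range_succ']
    congr 1
    · apply Finset.sum_congr rfl
      intro i hi
      simp only [mem_range] at hi
      rw [show n+1-(i+1) = n - i from by omega]
      by_cases hp : n % 2 = i % 2
      · rw [if_pos (show (n+1)%2 = (i+1)%2 from by omega), if_pos hp, if_pos hp, gb_succ]
        ring
      · rw [if_neg (show ¬(n+1)%2 = (i+1)%2 from by omega), if_neg hp, if_neg hp,
          mul_zero, add_zero]
    · by_cases hp : n % 2 = 0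
      · rw [if_neg (show ¬(n+1)%2 = 0%2 from by omega), if_pos hp]
      · rw [if_pos (show (n+1)%2 = 0%2 from by omega), if_neg hp, gb_zero, pow_zero,
          Nat.sub_zero]
        ring
  rw [expand, Finset.sum_add_distrib, ← Finset.mul_sum,
    show (∑ i ∈ range (n+1), if n % 2 = i % 2 then X ^ i * gbinomPoly n i * Pq (n - i) else 0)
      = cS n from rfl]
  linear_combination S2lem n

lemma stepD (n : ℕ) : dS (n+1) = X * dS n + (X ^ (n+1) * cS n - gS n) := by
  have expand : dS (n+1) = (∑ i ∈ range (n+1),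
      (X * (if n % 2 = i % 2 then 0 else X ^ i * gbinomPoly n i * Pq (n - i))
        + (if n % 2 = i % 2 then 0 else X ^ (2*(i+1)) * gbinomPoly n (i+1) * Pq (n - i))))
      + (if n % 2 = 0 then Pq (n+1) else 0) := by
    rw [show dS (n+1) = ∑ k ∈ range (n+1+1),
        (if (n+1) % 2 = k % 2 then 0 else X ^ k * gbinomPoly (n+1) k * Pq (n+1-k)) from rfl,
      Finset.sum_range_succ']
    congr 1
    · apply Finset.sum_congr rfl
      intro i hi
      simp only [mem_range] at hi
      rw [show n+1-(i+1) = n - i from by omega]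
      by_cases hp : n % 2 = i % 2
      · rw [if_pos (show (n+1)%2 = (i+1)%2 from by omega), if_pos hp, if_pos hp,
          mul_zero, add_zero]
      · rw [if_neg (show ¬(n+1)%2 = (i+1)%2 from by omega), if_neg hp, if_neg hp, gb_succ]
        ring
    · by_cases hp : n % 2 = 0
      · rw [if_neg (show ¬(n+1)%2 = 0%2 from by omega), if_pos hp, gb_zero, pow_zero,
          Nat.sub_zero]
        ring
      · rw [if_pos (show (n+1)%2 = 0%2 from by omega), if_neg hp]
  rw [expand, Finset.sum_add_distrib, ← Finset.mul_sum,
    show (∑ i ∈ range (n+1), if n % 2 = i % 2 then 0 else X ^ i * gbinomPoly n i * Pq (n - i))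
      = dS n from rfl]
  linear_combination S3lem n

lemma stepG (n : ℕ) : gS (n+1) = X ^ (n+2) * cS n + X ^ (n+1) * dS n := by
  have expand : gS (n+1) = (∑ i ∈ range (n+1),
      (X ^ (n+2) * (if n % 2 = i % 2 then X ^ i * gbinomPoly n i * Pq (n - i) else 0)
        + (if n % 2 = i % 2 then X ^ (2*(i+1)) * gbinomPoly n (i+1) * Pq (n - i) else 0)))
      + (if n % 2 = 0 then 0 else Pq (n+1)) := by
    rw [show gS (n+1) = ∑ k ∈ range (n+1+1),
        (if (n+1) % 2 = k % 2 then X ^ (2*k) * gbinomPoly (n+1) k * Pq (n+1-k) else 0) from rfl,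
      Finset.sum_range_succ']
    congr 1
    · apply Finset.sum_congr rfl
      intro i hi
      simp only [mem_range] at hi
      rw [show n+1-(i+1) = n - i from by omega]
      by_cases hp : n % 2 = i % 2
      · rw [if_pos (show (n+1)%2 = (i+1)%2 from by omega), if_pos hp, if_pos hp,
          gb_dual n i (by omega)]
        have he : (X : Polynomial ℤ) ^ (2*(i+1)) * X ^ (n-i) = X ^ (n+2) * X ^ i := by
          rw [← pow_add, ← pow_add, show 2*(i+1) + (n-i) = (n+2)+i from by omega]
        linear_combination (gbinomPoly n i * Pq (n-i)) * he
      · rw [if_neg (show ¬(n+1)%2 = (i+1)%2 from by omega), if_neg hp, if_neg hp,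
          mul_zero, add_zero]
    · by_cases hp : n % 2 = 0
      · rw [if_neg (show ¬(n+1)%2 = 0%2 from by omega), if_pos hp]
      · rw [if_pos (show (n+1)%2 = 0%2 from by omega), if_neg hp, gb_zero, Nat.sub_zero]
        ring
  rw [expand, Finset.sum_add_distrib, ← Finset.mul_sum,
    show (∑ i ∈ range (n+1), if n % 2 = i % 2 then X ^ i * gbinomPoly n i * Pq (n - i) else 0)
      = cS n from rfl]
  linear_combination S2lem n

lemma stepA (n : ℕ) : aS (n+1) = aS n + (X ^ (n+1) * aS n - cS n) := by
  have expand : aS (n+1) = (∑ i ∈ range (n+1),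
      (gbinomPoly n i * Pq (n - i) + X ^ (i+1) * gbinomPoly n (i+1) * Pq (n - i)))
      + Pq (n+1) := by
    rw [show aS (n+1) = ∑ k ∈ range (n+1+1), gbinomPoly (n+1) k * Pq (n+1-k) from rfl,
      Finset.sum_range_succ']
    congr 1
    · apply Finset.sum_congr rfl
      intro i hi
      simp only [mem_range] at hi
      rw [show n+1-(i+1) = n - i from by omega, gb_succ]
      ring
    · rw [gb_zero, Nat.sub_zero, one_mul]
  rw [expand, Finset.sum_add_distrib,
    show (∑ i ∈ range (n+1), gbinomPoly n i * Pq (n - i)) = aS n from rfl]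
  linear_combination S4lem n

lemma cdg (n : ℕ) : cS n = X ^ (T n) ∧ dS n = X ^ (T n) - X ^ (T (n-1))
    ∧ gS n = X ^ (T n + 1) + X ^ (T n) - X ^ (T (n-1) + 1) := by
  induction n with
  | zero =>
    refine ⟨?_, ?_, ?_⟩ <;> simp [cS, dS, gS, T, Pq, gb_zero] <;> ring
  | succ n ih =>
    obtain ⟨hc, hd, hg⟩ := ih
    have h1 : T n = T (n-1) + n := (T_pred n).symm
    have hsub : n + 1 - 1 = n := rfl
    refine ⟨?_, ?_, ?_⟩
    · rw [stepC, hc, hd, T_succ, h1]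
      simp only [pow_add, pow_succ]
      ring
    · rw [stepD, hc, hd, hg, hsub, T_succ, h1]
      simp only [pow_add, pow_succ]
      ring
    · rw [stepG, hc, hd, hsub, T_succ, h1]
      simp only [pow_add, pow_succ]
      ring

lemma aXT (n : ℕ) : aS n = X ^ (T n) := by
  induction n with
  | zero => simp [aS, T, Pq, gb_zero]
  | succ n ih =>
    rw [stepA, ih, (cdg n).1, T_succ]
    simp only [pow_add]
    ring

lemma sum_eq (n : ℕ) :
    (X : Polynomial ℤ) ^ (n * (n + 1) / 2) = ∑ r ∈ range (n + 1), gbinomPoly n (n - r) * Pq r := by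
  have hrefl := Finset.sum_range_reflect (fun r => gbinomPoly n (n - r) * Pq r) (n+1)
  have hsum : ∀ j ∈ range (n+1),
      (fun r => gbinomPoly n (n - r) * Pq r) (n + 1 - 1 - j) = gbinomPoly n j * Pq (n - j) := by
    intro j hj
    simp only [mem_range] at hj
    simp only []
    rw [show n + 1 - 1 - j = n - j from rfl, show n - (n - j) = j from by omega]
  rw [← hrefl, Finset.sum_congr rfl hsum,
    show (∑ j ∈ range (n+1), gbinomPoly n j * Pq (n - j)) = aS n from rfl, aXT]
  rfl

lemma Pq_closed (r : ℕ) :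
    Pq (2*r) = ∏ i ∈ Icc 1 r, ((X : Polynomial ℤ) ^ (2*r+1) - X ^ (2*i)) ∧
    Pq (2*r+1) = ∏ i ∈ range (r+1), ((X : Polynomial ℤ) ^ (2*r+1) - X ^ (2*i)) := by
  have hodd : ∀ m : ℕ, Pq (2*m) = ∏ i ∈ Icc 1 m, ((X : Polynomial ℤ) ^ (2*m+1) - X ^ (2*i)) →
      Pq (2*m+1) = ∏ i ∈ range (m+1), ((X : Polynomial ℤ) ^ (2*m+1) - X ^ (2*i)) := by
    intro m hm
    have h1 : Pq (2*m+1) = (X ^ (2*m+1) - 1) * Pq (2*m) := by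
      rw [Pq_succ, if_pos (by omega)]
    rw [h1, hm, range_eq_Ico, Finset.prod_eq_prod_Ico_succ_bot (by omega),
      ← Finset.Ico_add_one_right_eq_Icc]
    norm_num
  induction r with
  | zero =>
    have he : Pq (2*0) = ∏ i ∈ Icc 1 0, ((X : Polynomial ℤ) ^ (2*0+1) - X ^ (2*i)) := by
      simp [Pq]
    exact ⟨he, hodd 0 he⟩
  | succ r ih =>
    obtain ⟨he, ho⟩ := ih
    have heven : Pq (2*(r+1)) = ∏ i ∈ Icc 1 (r+1), (X ^ (2*(r+1)+1) - X ^ (2*i)) := by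
      have h1 : Pq (2*(r+1)) = X ^ (2*(r+1)) * Pq (2*r+1) := by
        rw [show 2*(r+1) = (2*r+1)+1 from by ring, Pq_succ, if_neg (by omega), sub_zero]
      rw [h1, ho, ← Finset.Ico_add_one_right_eq_Icc, Finset.prod_Ico_eq_prod_range]
      have hterm : ∀ i ∈ range (r+1+1-1),
          ((X : Polynomial ℤ) ^ (2*(r+1)+1) - X ^ (2*(1+i)))
            = X ^ 2 * (X ^ (2*r+1) - X ^ (2*i)) := by
        intro i _
        rw [show 2*(r+1)+1 = 2 + (2*r+1) from by ring, show 2*(1+i) = 2 + 2*i from by ring,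
          pow_add, pow_add]
        ring
      rw [Finset.prod_congr rfl hterm, Finset.prod_mul_distrib, Finset.prod_const,
        Finset.card_range, show r+1+1-1 = r+1 from rfl, ← pow_mul]
    exact ⟨heven, hodd (r+1) heven⟩


/-- If `Q_n ∈ ℤ[q]` satisfies `q^(n(n+1)/2) = ∑_{r=0}^n C(n, n-r)_q Q_r`, then
`Q_{2r+1} = ∏_{i=0}^r (q^(2r+1) - q^(2i))` and `Q_{2r} = ∏_{i=1}^r (q^(2r+1) - q^(2i))`. -/
theorem recurrence_solution (Qp : ℕ → Polynomial ℤ)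
    (hrec : ∀ n, (Polynomial.X : Polynomial ℤ) ^ (n * (n + 1) / 2)
      = ∑ r ∈ range (n + 1), gbinomPoly n (n - r) * Qp r) :
    ∀ r : ℕ,
      Qp (2 * r + 1)
          = ∏ i ∈ range (r + 1),
              ((Polynomial.X : Polynomial ℤ) ^ (2 * r + 1) - Polynomial.X ^ (2 * i)) ∧
      Qp (2 * r)
          = ∏ i ∈ Icc 1 r,
              ((Polynomial.X : Polynomial ℤ) ^ (2 * r + 1) - Polynomial.X ^ (2 * i)) := by

  have hQ : ∀ n, Qp n = Pq n := by
    intro n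
    induction n using Nat.strong_induction_on with
    | _ n ih =>
      have h1 := hrec n
      have h2 := sum_eq n
      rw [Finset.sum_range_succ, Nat.sub_self, gb_zero, one_mul] at h1 h2
      have h3 : ∑ r ∈ range n, gbinomPoly n (n-r) * Qp r
          = ∑ r ∈ range n, gbinomPoly n (n-r) * Pq r :=
        Finset.sum_congr rfl (fun r hr => by rw [ih r (mem_range.mp hr)])
      linear_combination h2 - h1 - h3
  intro r
  exact ⟨by rw [hQ]; exact (Pq_closed r).2, by rw [hQ]; exact (Pq_closed r).1⟩
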